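/- Let I = I(G) be the edge ideal of a finite simple graph G. If v(I) ≥ 2, then there exists a vertex t_i of G with v(I : t_i) < v(I), where (I : t_i) = { g ∈ S : g·t_i ∈ I }. -/

import Mathlib

open MvPolynomial

attribute [local instance] Classical.propDecidable

/-- The v-number of a graded ideal `I` of a polynomial ring: the least `d ≥ 1` such that
there is a homogeneous polynomial `f` of degree `d` and an associated prime `p` of `S/I`
with `(I : f) = p`; by convention it is `0` when `I` is the ideal generated by the variables. -/
noncomputable def vNumber {K : Type*} [Field K] {σ : Type*}
    (I : Ideal (MvPolynomial σ K)) : ℕ :=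
  if I = Ideal.span (Set.range (X : σ → MvPolynomial σ K)) then 0
  else sInf {d : ℕ | 1 ≤ d ∧ ∃ f : MvPolynomial σ K, f.IsHomogeneous d ∧
    ∃ p ∈ associatedPrimes (MvPolynomial σ K) (MvPolynomial σ K ⧸ I),
      Submodule.colon I (Ideal.span {f}) = p}

/-- A squarefree monomial ideal: an ideal generated by squarefree monomials,
i.e. by products of distinct variables. -/
def IsSquarefreeMonomialIdeal {K : Type*} [Field K] {σ : Type*}
    (I : Ideal (MvPolynomial σ K)) : Prop :=
  ∃ E : Set (Finset σ), I = Ideal.span ((fun e : Finset σ => ∏ i ∈ e, X i) '' E)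

/-- A clutter on the vertex set `Fin s`: a family of edges, none of which contains another. -/
structure Clutter (s : ℕ) where
  edges : Finset (Finset (Fin s))
  antichain : ∀ e ∈ edges, ∀ f ∈ edges, e ⊆ f → e = f

namespace Clutter

variable {s : ℕ} (C : Clutter s)

/-- The edge ideal of a clutter. -/
noncomputable def edgeIdeal (K : Type*) [Field K] : Ideal (MvPolynomial (Fin s) K) :=
  Ideal.span ((fun e : Finset (Fin s) => ∏ i ∈ e, X i) '' C.edges)

/-- A stable (independent) set of a clutter: a set of vertices containing no edge. -/
def Stable (A : Finset (Fin s)) : Prop := ∀ e ∈ C.edges, ¬ (e ⊆ A)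

/-- A maximal stable set of a clutter. -/
def MaximalStable (A : Finset (Fin s)) : Prop :=
  C.Stable A ∧ ∀ B : Finset (Fin s), C.Stable B → A ⊆ B → A = B

/-- The neighbor set `N_C(A)`: all vertices `i` such that `{i} ∪ A` contains an edge. -/
noncomputable def neighborSet (A : Finset (Fin s)) : Finset (Fin s) :=
  Finset.univ.filter (fun i => ∃ e ∈ C.edges, e ⊆ insert i A)

/-- A vertex cover of a clutter: a set of vertices meeting every edge. -/
def IsVertexCover (B : Finset (Fin s)) : Prop := ∀ e ∈ C.edges, ∃ i ∈ e, i ∈ B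

/-- A minimal vertex cover: a vertex cover minimal with respect to inclusion. -/
def IsMinimalVertexCover (B : Finset (Fin s)) : Prop :=
  C.IsVertexCover B ∧ ∀ B' ⊂ B, ¬ C.IsVertexCover B'

/-- The independence number `β₀(C)`: the maximum size of a stable set. -/
noncomputable def indepNum : ℕ := sSup {n : ℕ | ∃ A : Finset (Fin s), C.Stable A ∧ A.card = n}

/-- The independent domination number `i(C)`: the minimum size of a maximal stable set. -/
noncomputable def idomNum : ℕ :=
  sInf {n : ℕ | ∃ A : Finset (Fin s), C.MaximalStable A ∧ A.card = n}

/-- The vertex covering number `α₀(C)`: the minimum size of a vertex cover. -/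
noncomputable def coverNum : ℕ :=
  sInf {n : ℕ | ∃ B : Finset (Fin s), C.IsVertexCover B ∧ B.card = n}

/-- The ideal of covers of a clutter, generated by the monomials of the minimal vertex covers. -/
noncomputable def coverIdeal (K : Type*) [Field K] : Ideal (MvPolynomial (Fin s) K) :=
  Ideal.span ((fun B : Finset (Fin s) => ∏ i ∈ B, X i) '' {B | C.IsMinimalVertexCover B})

/-- The clutter is well-covered if every maximal stable set has maximum cardinality `β₀(C)`. -/
def WellCovered : Prop := ∀ A : Finset (Fin s), C.MaximalStable A → A.card = C.indepNum

/-- Deletion of an edge from a clutter. -/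
def deleteEdge (e : Finset (Fin s)) : Clutter s :=
  ⟨C.edges.erase e, fun a ha b hb hab =>
    C.antichain a (Finset.mem_of_mem_erase ha) b (Finset.mem_of_mem_erase hb) hab⟩

/-- An edge-critical clutter: deleting any edge increases the independence number. -/
def EdgeCritical : Prop := ∀ e ∈ C.edges, C.indepNum < (C.deleteEdge e).indepNum

end Clutter

section Graphs

variable {V : Type*}

/-- The edge ideal of a simple graph. -/
noncomputable def gEdgeIdeal (K : Type*) [Field K] (G : SimpleGraph V) :
    Ideal (MvPolynomial V K) :=
  Ideal.span {m : MvPolynomial V K | ∃ i j : V, G.Adj i j ∧ m = X i * X j}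

/-- A stable (independent) set of vertices of a graph. -/
def gStable (G : SimpleGraph V) (A : Finset V) : Prop := ∀ i ∈ A, ∀ j ∈ A, ¬ G.Adj i j

/-- A maximal stable set of a graph. -/
def gMaximalStable (G : SimpleGraph V) (A : Finset V) : Prop :=
  gStable G A ∧ ∀ B : Finset V, gStable G B → A ⊆ B → A = B

/-- The independence number `β₀(G)`. -/
noncomputable def gIndepNum [Fintype V] (G : SimpleGraph V) : ℕ :=
  sSup {n : ℕ | ∃ A : Finset V, gStable G A ∧ A.card = n}

/-- A maximum stable set: a stable set of maximum cardinality `β₀(G)`. -/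
def gMaximumStable [Fintype V] (G : SimpleGraph V) (A : Finset V) : Prop :=
  gStable G A ∧ A.card = gIndepNum G

/-- The independent domination number `i(G)`: minimum size of a maximal stable set. -/
noncomputable def gIdomNum (G : SimpleGraph V) : ℕ :=
  sInf {n : ℕ | ∃ A : Finset V, gMaximalStable G A ∧ A.card = n}

/-- A well-covered graph: every maximal stable set is a maximum stable set. -/
def gWellCovered [Fintype V] (G : SimpleGraph V) : Prop :=
  ∀ A : Finset V, gMaximalStable G A → A.card = gIndepNum G

/-- The class `W₂`: graphs with at least two vertices in which any two disjoint stable sets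
are contained in two disjoint maximum stable sets. -/
def W2 [Fintype V] (G : SimpleGraph V) : Prop :=
  2 ≤ Fintype.card V ∧ ∀ A B : Finset V, gStable G A → gStable G B → Disjoint A B →
    ∃ A' B' : Finset V, gMaximumStable G A' ∧ gMaximumStable G B' ∧ Disjoint A' B' ∧
      A ⊆ A' ∧ B ⊆ B'

/-- The neighbor set of a set of vertices of a graph: all vertices adjacent to a vertex of `A`. -/
noncomputable def gNeighborSet [Fintype V] (G : SimpleGraph V) (A : Finset V) : Finset V :=
  Finset.univ.filter (fun i => ∃ j ∈ A, G.Adj i j)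

/-- A vertex cover of a graph. -/
def gIsVertexCover (G : SimpleGraph V) (B : Finset V) : Prop :=
  ∀ i j : V, G.Adj i j → i ∈ B ∨ j ∈ B

/-- A minimal vertex cover of a graph. -/
def gIsMinimalVertexCover (G : SimpleGraph V) (B : Finset V) : Prop :=
  gIsVertexCover G B ∧ ∀ B' ⊂ B, ¬ gIsVertexCover G B'

/-- An edge-critical graph: deleting any edge increases the independence number. -/
def gEdgeCritical [Fintype V] (G : SimpleGraph V) : Prop :=
  ∀ i j : V, G.Adj i j → gIndepNum G < gIndepNum (G.deleteEdges {s(i, j)})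

end Graphs

section AuxLemmasForStatement10

open Finsupp

variable {K : Type*} [Field K] {s : ℕ}

/-- The substitution killing the variables in `C`. -/
private noncomputable def killVars (C : Set (Fin s)) :
    MvPolynomial (Fin s) K →ₐ[K] MvPolynomial (Fin s) K :=
  aeval (fun j => if j ∈ C then 0 else X j)

private lemma sub_killVars_mem (C : Set (Fin s)) (h : MvPolynomial (Fin s) K) :
    h - killVars C h ∈ Ideal.span (X '' C : Set (MvPolynomial (Fin s) K)) := by
  induction h using MvPolynomial.induction_on with
  | C a => simp [killVars]
  | add p q hp hq =>
      have hsum := Ideal.add_mem _ hp hq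
      have : p + q - killVars C (p + q)
          = p - killVars C p + (q - killVars C q) := by
        rw [map_add]; ring
      rw [this]; exact hsum
  | mul_X p i hp =>
      have hXi : X i - killVars C (X i)
          ∈ Ideal.span (X '' C : Set (MvPolynomial (Fin s) K)) := by
        by_cases hi : i ∈ C
        · have hmem : (X i : MvPolynomial (Fin s) K)
              ∈ Ideal.span (X '' C : Set (MvPolynomial (Fin s) K)) :=
            Ideal.subset_span ⟨i, hi, rfl⟩
          simpa [killVars, hi] using hmem
        · simp [killVars, hi]
      have : p * X i - killVars C (p * X i)
          = (p - killVars C p) * X i + killVars C p * (X i - killVars C (X i)) := by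
        rw [map_mul]; ring
      rw [this]
      exact Ideal.add_mem _ (Ideal.mul_mem_right _ _ hp) (Ideal.mul_mem_left _ _ hXi)

private lemma killVars_eq_zero_of_mem {C : Set (Fin s)} {h : MvPolynomial (Fin s) K}
    (hm : h ∈ Ideal.span (X '' C : Set (MvPolynomial (Fin s) K))) : killVars C h = 0 := by
  have hle : Ideal.span (X '' C : Set (MvPolynomial (Fin s) K)) ≤
      RingHom.ker (killVars (K := K) C).toRingHom := by
    rw [Ideal.span_le]
    rintro m ⟨j, hj, rfl⟩
    simp [RingHom.mem_ker, killVars, hj]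
  exact hle hm

private lemma mem_of_killVars_eq_zero {C : Set (Fin s)} {h : MvPolynomial (Fin s) K}
    (h0 : killVars C h = 0) : h ∈ Ideal.span (X '' C : Set (MvPolynomial (Fin s) K)) := by
  have := sub_killVars_mem C h
  rwa [h0, sub_zero] at this

private lemma isPrime_span_X_image (C : Set (Fin s)) :
    (Ideal.span (X '' C : Set (MvPolynomial (Fin s) K))).IsPrime := by
  constructor
  · intro htop
    have h1 : killVars C (1 : MvPolynomial (Fin s) K) = 0 :=
      killVars_eq_zero_of_mem (by rw [htop]; trivial)
    simp at h1
  · intro a b hab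
    have : killVars C a * killVars C b = 0 := by
      rw [← map_mul]; exact killVars_eq_zero_of_mem hab
    rcases mul_eq_zero.mp this with h' | h'
    · exact Or.inl (mem_of_killVars_eq_zero h')
    · exact Or.inr (mem_of_killVars_eq_zero h')

/-- The exponents of the generators of the edge ideal. -/
private def edgeExps (G : SimpleGraph (Fin s)) : Set (Fin s →₀ ℕ) :=
  {u | ∃ a b : Fin s, G.Adj a b ∧ u = Finsupp.single a 1 + Finsupp.single b 1}

private lemma X_mul_X_eq (i j : Fin s) :
    (X i * X j : MvPolynomial (Fin s) K)
      = monomial (Finsupp.single i 1 + Finsupp.single j 1) 1 := by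
  rw [X, X, monomial_mul, one_mul]

private lemma gEdgeIdeal_eq_span (G : SimpleGraph (Fin s)) :
    gEdgeIdeal K G = Ideal.span ((fun u => monomial u (1 : K)) '' edgeExps G) := by
  unfold gEdgeIdeal
  congr 1
  ext m
  constructor
  · rintro ⟨i, j, hij, rfl⟩
    exact ⟨_, ⟨i, j, hij, rfl⟩, (X_mul_X_eq i j).symm⟩
  · rintro ⟨u, ⟨i, j, hij, rfl⟩, rfl⟩
    exact ⟨i, j, hij, (X_mul_X_eq i j).symm⟩

private lemma mem_gEdgeIdeal_iff {G : SimpleGraph (Fin s)} {h : MvPolynomial (Fin s) K} :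
    h ∈ gEdgeIdeal K G ↔ ∀ μ ∈ h.support, ∃ u ∈ edgeExps G, u ≤ μ := by
  rw [gEdgeIdeal_eq_span, mem_ideal_span_monomial_image]

private lemma edge_le {a b : Fin s} (hab : a ≠ b) {μ : Fin s →₀ ℕ}
    (ha : μ a ≠ 0) (hb : μ b ≠ 0) :
    Finsupp.single a 1 + Finsupp.single b 1 ≤ μ := by
  rw [Finsupp.le_def]
  intro j
  rw [Finsupp.add_apply, Finsupp.single_apply, Finsupp.single_apply]
  rcases eq_or_ne a j with rfl | hja
  · rw [if_pos rfl, if_neg (fun hbj => hab hbj.symm)]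
    omega
  · rcases eq_or_ne b j with rfl | hjb
    · rw [if_neg hja, if_pos rfl]
      omega
    · rw [if_neg hja, if_neg hjb]
      omega

private lemma gEdgeIdeal_le_span {G : SimpleGraph (Fin s)} {C : Set (Fin s)}
    (hC : ∀ a b : Fin s, G.Adj a b → a ∈ C ∨ b ∈ C) :
    gEdgeIdeal K G ≤ Ideal.span (X '' C : Set (MvPolynomial (Fin s) K)) := by
  unfold gEdgeIdeal
  rw [Ideal.span_le]
  rintro m ⟨i, j, hij, rfl⟩
  rcases hC i j hij with hc | hc
  · exact Ideal.mul_mem_right _ _ (Ideal.subset_span ⟨i, hc, rfl⟩)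
  · rw [mul_comm]
    exact Ideal.mul_mem_right _ _ (Ideal.subset_span ⟨j, hc, rfl⟩)

private lemma edgeIdeal_radical {G : SimpleGraph (Fin s)} {f : MvPolynomial (Fin s) K}
    (hf : f * f ∈ gEdgeIdeal K G) : f ∈ gEdgeIdeal K G := by
  rw [mem_gEdgeIdeal_iff]
  intro μ hμ
  by_contra hbad
  push_neg at hbad
  have hC : ∀ a b : Fin s, G.Adj a b → μ a = 0 ∨ μ b = 0 := by
    intro a b hab
    by_contra hcon
    push_neg at hcon
    exact hbad _ ⟨a, b, hab, rfl⟩ (edge_le hab.ne hcon.1 hcon.2)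
  have h2 : f * f ∈ Ideal.span (X '' {j | μ j = 0} : Set (MvPolynomial (Fin s) K)) :=
    gEdgeIdeal_le_span hC hf
  have h1 : f ∈ Ideal.span (X '' {j | μ j = 0} : Set (MvPolynomial (Fin s) K)) :=
    ((isPrime_span_X_image _).mem_or_mem h2).elim id id
  rw [mem_ideal_span_X_image] at h1
  obtain ⟨j, hjC, hj0⟩ := h1 μ hμ
  exact hj0 hjC

private lemma colon_colon_singleton {R : Type*} [CommRing R] (J : Ideal R) (a b : R) :
    Submodule.colon (Submodule.colon J (Ideal.span {a})) (Ideal.span {b})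
      = Submodule.colon J (Ideal.span {a * b}) := by
  ext r
  simp only [Ideal.mem_colon_span_singleton]
  constructor
  · intro h'
    have e : r * b * a = r * (a * b) := by ring
    rwa [e] at h'
  · intro h'
    have e : r * b * a = r * (a * b) := by ring
    rwa [e]

private lemma isAssociated_of_colon_eq {R : Type*} [CommRing R] {J p : Ideal R} {g : R}
    (hp : p.IsPrime) (h : Submodule.colon J (Ideal.span {g}) = p) :
    p ∈ associatedPrimes R (R ⧸ J) := by
  refine ⟨hp, Ideal.Quotient.mk J g, ?_⟩
  suffices hc : p = (⊥ : Submodule R (R ⧸ J)).colon {Ideal.Quotient.mk J g} by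
    rw [← hc, hp.radical]
  ext r
  rw [Submodule.mem_colon_singleton, ← h, Ideal.mem_colon_span_singleton]
  have e : r • (Ideal.Quotient.mk J g) = Ideal.Quotient.mk J (r * g) := rfl
  rw [e, Submodule.mem_bot, Ideal.Quotient.eq_zero_iff_mem]

end AuxLemmasForStatement10

/-- If `v(I(G)) ≥ 2` for a graph `G`, then there is a vertex `i` with
`v(I : t_i) < v(I)`. -/
theorem exists_vertex_vNumber_colon_lt {K : Type*} [Field K] {s : ℕ}
    (G : SimpleGraph (Fin s)) (h : 2 ≤ vNumber (gEdgeIdeal K G)) :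
    ∃ i : Fin s, vNumber (Submodule.colon (gEdgeIdeal K G)
        (Ideal.span {(X i : MvPolynomial (Fin s) K)})) <
      vNumber (gEdgeIdeal K G) := by
  have hne : gEdgeIdeal K G ≠
      Ideal.span (Set.range (X : Fin s → MvPolynomial (Fin s) K)) := by
    intro e
    rw [vNumber, if_pos e] at h
    omega
  set S := {d : ℕ | 1 ≤ d ∧ ∃ f : MvPolynomial (Fin s) K, f.IsHomogeneous d ∧
    ∃ p ∈ associatedPrimes (MvPolynomial (Fin s) K)
      (MvPolynomial (Fin s) K ⧸ gEdgeIdeal K G),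
      Submodule.colon (gEdgeIdeal K G) (Ideal.span {f}) = p} with hSdef
  have hv : vNumber (gEdgeIdeal K G) = sInf S := by
    rw [vNumber, if_neg hne]
  have hSne : S.Nonempty := by
    by_contra h'
    rw [Set.not_nonempty_iff_eq_empty] at h'
    rw [hv, h', Nat.sInf_empty] at h
    omega
  obtain ⟨hd1, f, hfhom, p, hpAss, hcolon⟩ := Nat.sInf_mem hSne
  set d := sInf S with hddef
  have hd2 : 2 ≤ d := by rw [hv] at h; exact h
  have hp : p.IsPrime := hpAss.1
  have hIp : gEdgeIdeal K G ≤ p := by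
    rw [← hcolon]
    intro r hr
    rw [Ideal.mem_colon_span_singleton]
    exact Ideal.mul_mem_right _ _ hr
  have hfI : f ∉ gEdgeIdeal K G := by
    intro hfmem
    apply hp.ne_top
    rw [← hcolon, eq_top_iff]
    intro r _
    rw [Ideal.mem_colon_span_singleton]
    exact Ideal.mul_mem_left _ _ hfmem
  set Cs : Set (Fin s) := {j | X j ∈ p} with hCdef
  set q : Ideal (MvPolynomial (Fin s) K) := Ideal.span (X '' Cs) with hqdef
  have hqp : q ≤ p := by
    rw [hqdef, Ideal.span_le]
    rintro m ⟨j, hj, rfl⟩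
    exact hj
  have hIq : gEdgeIdeal K G ≤ q := by
    unfold gEdgeIdeal
    rw [Ideal.span_le]
    rintro m ⟨i, j, hij, rfl⟩
    have hm : X i * X j ∈ p := by
      apply hIp
      exact Ideal.subset_span ⟨i, j, hij, rfl⟩
    rcases hp.mem_or_mem hm with hc | hc
    · exact Ideal.mul_mem_right _ _ (Ideal.subset_span ⟨i, hc, rfl⟩)
    · rw [mul_comm]
      exact Ideal.mul_mem_right _ _ (Ideal.subset_span ⟨j, hc, rfl⟩)
  have hfq : f ∉ q := by
    intro hfq
    apply hfI
    apply edgeIdeal_radical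
    have hfp : f ∈ p := hqp hfq
    rw [← hcolon, Ideal.mem_colon_span_singleton] at hfp
    exact hfp
  have hpq : p ≤ q := by
    intro r hr
    rw [← hcolon, Ideal.mem_colon_span_singleton] at hr
    have hrf : r * f ∈ q := hIq hr
    have h0 : killVars Cs (r * f) = 0 := killVars_eq_zero_of_mem hrf
    rw [map_mul] at h0
    rcases mul_eq_zero.mp h0 with h' | h'
    · exact mem_of_killVars_eq_zero h'
    · exact absurd (mem_of_killVars_eq_zero h') hfq
  have hpq' : p = q := le_antisymm hpq hqp
  have hfne : f.support.Nonempty := by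
    rw [MvPolynomial.support_nonempty]
    intro e
    exact hfI (e ▸ (gEdgeIdeal K G).zero_mem)
  have hinf : (f.support.inf fun u => Submodule.colon (gEdgeIdeal K G)
      (Ideal.span {(monomial u (1 : K) : MvPolynomial (Fin s) K)})) ≤ p := by
    rw [← hcolon]
    intro r hr
    rw [Ideal.mem_colon_span_singleton, f.as_sum, Finset.mul_sum]
    apply Ideal.sum_mem
    intro u hu
    have hru : r * monomial u (1 : K) ∈ gEdgeIdeal K G := by
      have hle := Finset.inf_le (f := fun u => Submodule.colon (gEdgeIdeal K G)
        (Ideal.span {(monomial u (1 : K) : MvPolynomial (Fin s) K)})) hu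
      have := hle hr
      rwa [Ideal.mem_colon_span_singleton] at this
    have e1 : (monomial u (MvPolynomial.coeff u f) : MvPolynomial (Fin s) K)
        = MvPolynomial.C (MvPolynomial.coeff u f) * monomial u 1 := by
      rw [C_mul_monomial, mul_one]
    rw [e1]
    have e2 : r * (MvPolynomial.C (MvPolynomial.coeff u f) * monomial u 1)
        = MvPolynomial.C (MvPolynomial.coeff u f) * (r * monomial u 1) := by ring
    rw [e2]
    exact Ideal.mul_mem_left _ _ hru
  obtain ⟨u0, hu0s, hu0le⟩ := (hp.inf_le').mp hinf
  have hqle : ∀ u ∈ f.support, q ≤ Submodule.colon (gEdgeIdeal K G)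
      (Ideal.span {(monomial u (1 : K) : MvPolynomial (Fin s) K)}) := by
    intro u hu
    rw [hqdef, Ideal.span_le]
    rintro m ⟨j, hj, rfl⟩
    rw [SetLike.mem_coe, Ideal.mem_colon_span_singleton]
    have hXjf : X j * f ∈ gEdgeIdeal K G := by
      have hjp : (X j : MvPolynomial (Fin s) K) ∈ p := hj
      rw [← hcolon, Ideal.mem_colon_span_singleton] at hjp
      exact hjp
    rw [mem_gEdgeIdeal_iff] at hXjf
    have hμ : (Finsupp.single j 1 + u) ∈ (X j * f).support := by
      rw [MvPolynomial.support_X_mul]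
      exact Finset.mem_map.mpr ⟨u, hu, rfl⟩
    obtain ⟨e, he, hele⟩ := hXjf _ hμ
    have eXm : (X j : MvPolynomial (Fin s) K) * monomial u 1
        = monomial (Finsupp.single j 1 + u) 1 := by
      rw [X, monomial_mul, one_mul]
    rw [eXm, mem_gEdgeIdeal_iff]
    intro μ hμ'
    rw [MvPolynomial.support_monomial, if_neg one_ne_zero, Finset.mem_singleton] at hμ'
    exact ⟨e, he, hμ' ▸ hele⟩
  have hcolon_u0 : Submodule.colon (gEdgeIdeal K G)
      (Ideal.span {(monomial u0 (1 : K) : MvPolynomial (Fin s) K)}) = p :=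
    le_antisymm hu0le (hpq'.le.trans (hqle u0 hu0s))
  have hu0deg : u0.degree = d := by
    have := hfhom (MvPolynomial.mem_support_iff.mp hu0s)
    rwa [Finsupp.degree_eq_weight_one]
  have hu0ne : u0 ≠ 0 := by
    intro e
    rw [e, map_zero] at hu0deg
    omega
  obtain ⟨i, hi⟩ := Finsupp.support_nonempty_iff.mpr hu0ne
  have hu0i : u0 i ≠ 0 := Finsupp.mem_support_iff.mp hi
  set u1 := u0 - Finsupp.single i 1 with hu1def
  have hkey : Finsupp.single i 1 + u1 = u0 := by
    ext j
    rw [Finsupp.add_apply, hu1def, Finsupp.tsub_apply]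
    rcases eq_or_ne i j with rfl | hij
    · rw [Finsupp.single_eq_same]
      omega
    · rw [Finsupp.single_eq_of_ne' hij]
      omega
  have hsingledeg : (Finsupp.single i 1 : Fin s →₀ ℕ).degree = 1 := by
    rw [Finsupp.degree_eq_weight_one, Finsupp.weight_apply, Finsupp.sum_single_index] <;> simp
  have hadd : (Finsupp.single i 1 + u1).degree
      = (Finsupp.single i 1 : Fin s →₀ ℕ).degree + u1.degree := by
    simp only [Finsupp.degree_eq_weight_one, map_add]
  have hu1deg : u1.degree = d - 1 := by
    rw [hkey, hu0deg, hsingledeg] at hadd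
    omega
  refine ⟨i, ?_⟩
  set J := Submodule.colon (gEdgeIdeal K G)
    (Ideal.span {(X i : MvPolynomial (Fin s) K)}) with hJdef
  have hJcolon : Submodule.colon J
      (Ideal.span {(monomial u1 (1 : K) : MvPolynomial (Fin s) K)}) = p := by
    rw [hJdef, colon_colon_singleton]
    have e : (X i : MvPolynomial (Fin s) K) * monomial u1 1 = monomial u0 1 := by
      rw [X, monomial_mul, one_mul, hkey]
    rw [e, hcolon_u0]
  rw [hv]
  by_cases hJtop : J = Ideal.span (Set.range (X : Fin s → MvPolynomial (Fin s) K))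
  · rw [vNumber, if_pos hJtop]
    omega
  · rw [vNumber, if_neg hJtop]
    have hmem : d - 1 ∈ {d' : ℕ | 1 ≤ d' ∧ ∃ f : MvPolynomial (Fin s) K,
        f.IsHomogeneous d' ∧ ∃ p' ∈ associatedPrimes (MvPolynomial (Fin s) K)
          (MvPolynomial (Fin s) K ⧸ J),
        Submodule.colon J (Ideal.span {f}) = p'} :=
      ⟨by omega, monomial u1 1, isHomogeneous_monomial _ hu1deg, p,
        isAssociated_of_colon_eq hp hJcolon, hJcolon⟩
    exact lt_of_le_of_lt (Nat.sInf_le hmem) (by omega)
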